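/- The category of core regular double Stone algebras (objects: CRDSAs; morphisms: CRDSA homomorphisms) is dually equivalent to the category of core regular double pairwise Stone spaces, whose objects are the pairwise Stone spaces (X,t1,t2) satisfying: (1) Int_1(v) ∈ B1 for all v ∈ B2; (2) Int_2(u) ∈ B2 for all u ∈ B1; (3) Cl_1(u)^c is t1-clopen for all u ∈ B1; (4) Cl_2(u^c)^c is t2-clopen for all u ∈ B1; (5) Cl_1(u) = Cl_1(w) and Int_2(u) = Int_2(w) imply u = w for u, w ∈ B1; (6) {u ∈ B1 : Bd_1(u) = u^c and Bd_2(u^c) = u} ≠ ∅; and whose morphisms are the bi-continuous maps f with f^{-1}(Bd_1(u)) ⊆ Cl_1(f^{-1}(u)) and f^{-1}(Bd_2(u^c)) ⊆ Cl_2(f^{-1}(u^c)) for every basis element u of the codomain. -/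

import Mathlib

open Topology CategoryTheory

/-! ### The category of core regular double Stone algebras -/

class DoubleStoneAlgebra (α : Type*) extends DistribLattice α, BoundedOrder α where
  pstar : α → α
  pplus : α → α
  pstar_spec : ∀ x y : α, y ⊓ x = ⊥ ↔ y ≤ pstar x
  pplus_spec : ∀ x y : α, y ⊔ x = ⊤ ↔ pplus x ≤ y
  stone : ∀ x : α, pstar x ⊔ pstar (pstar x) = ⊤
  stone_dual : ∀ x : α, pplus x ⊓ pplus (pplus x) = ⊥

class CRDSA (α : Type*) extends DoubleStoneAlgebra α where
  regular : ∀ x y : α, pstar x = pstar y → pplus x = pplus y → x = y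
  core_nonempty : ∃ k : α, pstar k = ⊥ ∧ pplus k = ⊤

open DoubleStoneAlgebra

/-- A CRDSA homomorphism: a map preserving ⊔, ⊓, *, ⁺, ⊥ and ⊤. -/
def IsCRDSAHom {A B : Type*} [CRDSA A] [CRDSA B] (f : A → B) : Prop :=
  (∀ x y : A, f (x ⊔ y) = f x ⊔ f y) ∧
  (∀ x y : A, f (x ⊓ y) = f x ⊓ f y) ∧
  (∀ x : A, f (pstar x) = pstar (f x)) ∧
  (∀ x : A, f (pplus x) = pplus (f x)) ∧
  f ⊥ = ⊥ ∧ f ⊤ = ⊤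

/-- The category of core regular double Stone algebras with CRDSA homomorphisms. -/
structure CRDSACat where
  carrier : Type
  [str : CRDSA carrier]

attribute [instance] CRDSACat.str

instance : Category CRDSACat where
  Hom A B := {f : A.carrier → B.carrier // IsCRDSAHom f}
  id A := ⟨id, fun _ _ => rfl, fun _ _ => rfl, fun _ => rfl, fun _ => rfl, rfl, rfl⟩
  comp {A B C} f g := by
    refine ⟨g.1 ∘ f.1, ?_⟩
    obtain ⟨f1, f2, f3, f4, f5, f6⟩ := f.2
    obtain ⟨g1, g2, g3, g4, g5, g6⟩ := g.2
    exact ⟨fun x y => by simp [Function.comp, f1, g1],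
      fun x y => by simp [Function.comp, f2, g2],
      fun x => by simp [Function.comp, f3, g3],
      fun x => by simp [Function.comp, f4, g4],
      by simp [Function.comp, f5, g5],
      by simp [Function.comp, f6, g6]⟩
  id_comp f := Subtype.ext rfl
  comp_id f := Subtype.ext rfl
  assoc f g h := Subtype.ext rfl

/-! ### Core regular double pairwise Stone spaces -/

/-- `B1 = t1 ∩ δ2`: sets that are `t1`-open and `t2`-closed. -/
def B1 {X : Type*} (t1 t2 : TopologicalSpace X) : Set (Set X) :=
  {u : Set X | IsOpen[t1] u ∧ IsClosed[t2] u}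

/-- `B2 = t2 ∩ δ1`: sets that are `t2`-open and `t1`-closed. -/
def B2 {X : Type*} (t1 t2 : TopologicalSpace X) : Set (Set X) :=
  {u : Set X | IsOpen[t2] u ∧ IsClosed[t1] u}

/-- A core regular double pairwise Stone space: a pairwise Stone space (pairwise
compact, pairwise Hausdorff, pairwise zero-dimensional bitopological space)
satisfying conditions (1)–(6) making its basis lattice `B1` a core regular double
Stone algebra. -/
structure CRDPStoneSpace where
  X : Type
  t1 : TopologicalSpace X
  t2 : TopologicalSpace X
  /-- pairwise compact: every cover by sets open in `t1` or `t2` has a finite subcover -/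
  pairwise_compact : ∀ C : Set (Set X), (∀ u ∈ C, IsOpen[t1] u ∨ IsOpen[t2] u) →
    ⋃₀ C = Set.univ → ∃ F : Finset (Set X), ↑F ⊆ C ∧ ⋃₀ (↑F : Set (Set X)) = Set.univ
  /-- pairwise Hausdorff -/
  pairwise_hausdorff : ∀ x y : X, x ≠ y → ∃ U V : Set X, Disjoint U V ∧ x ∈ U ∧ y ∈ V ∧
    ((IsOpen[t1] U ∧ IsOpen[t2] V) ∨ (IsOpen[t2] U ∧ IsOpen[t1] V))
  /-- pairwise zero-dimensional -/
  basis1 : @TopologicalSpace.IsTopologicalBasis X t1 (B1 t1 t2)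
  basis2 : @TopologicalSpace.IsTopologicalBasis X t2 (B2 t1 t2)
  cond1 : ∀ v ∈ B2 t1 t2, @interior X t1 v ∈ B1 t1 t2
  cond2 : ∀ u ∈ B1 t1 t2, @interior X t2 u ∈ B2 t1 t2
  cond3 : ∀ u ∈ B1 t1 t2, @IsClopen X t1 ((closure[t1] u)ᶜ)
  cond4 : ∀ u ∈ B1 t1 t2, @IsClopen X t2 ((closure[t2] uᶜ)ᶜ)
  cond5 : ∀ u ∈ B1 t1 t2, ∀ w ∈ B1 t1 t2,
    closure[t1] u = closure[t1] w → @interior X t2 u = @interior X t2 w → u = w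
  cond6 : {u | u ∈ B1 t1 t2 ∧ @frontier X t1 u = uᶜ ∧ @frontier X t2 uᶜ = u}.Nonempty

/-- The morphism property: bi-continuity together with the boundary conditions
`f ⁻¹' (Bd₁ u) ⊆ Cl₁ (f ⁻¹' u)` and `f ⁻¹' (Bd₂ uᶜ) ⊆ Cl₂ (f ⁻¹' uᶜ)` for every
basis element `u` of the codomain. -/
def IsCRDPStoneMap (S T : CRDPStoneSpace) (f : S.X → T.X) : Prop :=
  Continuous[S.t1, T.t1] f ∧ Continuous[S.t2, T.t2] f ∧
  ∀ u ∈ B1 T.t1 T.t2,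
    f ⁻¹' (@frontier T.X T.t1 u) ⊆ @closure S.X S.t1 (f ⁻¹' u) ∧
    f ⁻¹' (@frontier T.X T.t2 uᶜ) ⊆ @closure S.X S.t2 (f ⁻¹' uᶜ)

private lemma preimage_closure_aux {W Y : Type*} (tW : TopologicalSpace W)
    (tY : TopologicalSpace Y) (f : W → Y) (v : Set Y)
    (h : f ⁻¹' (@frontier Y tY v) ⊆ @closure W tW (f ⁻¹' v)) :
    f ⁻¹' (@closure Y tY v) ⊆ @closure W tW (f ⁻¹' v) := by
  rw [@closure_eq_self_union_frontier Y tY v, Set.preimage_union]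
  exact Set.union_subset (@subset_closure W tW (f ⁻¹' v)) h

instance : Category CRDPStoneSpace where
  Hom S T := {f : S.X → T.X // IsCRDPStoneMap S T f}
  id S := ⟨id, @continuous_id S.X S.t1, @continuous_id S.X S.t2, fun u _ =>
    ⟨@frontier_subset_closure S.X S.t1 u, @frontier_subset_closure S.X S.t2 uᶜ⟩⟩
  comp {S T U} f g := by
    refine ⟨g.1 ∘ f.1, ?_⟩
    obtain ⟨fc1, fc2, fb⟩ := f.2
    obtain ⟨gc1, gc2, gb⟩ := g.2
    refine ⟨@Continuous.comp S.X T.X U.X S.t1 T.t1 U.t1 f.1 g.1 gc1 fc1,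
      @Continuous.comp S.X T.X U.X S.t2 T.t2 U.t2 f.1 g.1 gc2 fc2, ?_⟩
    intro u hu
    -- `v := g ⁻¹' u` belongs to the basis lattice of `T`
    have hv : g.1 ⁻¹' u ∈ B1 T.t1 T.t2 :=
      ⟨@Continuous.isOpen_preimage T.X U.X T.t1 U.t1 g.1 gc1 u hu.1,
       @IsClosed.preimage T.X U.X T.t2 U.t2 g.1 gc2 u hu.2⟩
    constructor
    · calc (g.1 ∘ f.1) ⁻¹' (@frontier U.X U.t1 u)
          = f.1 ⁻¹' (g.1 ⁻¹' (@frontier U.X U.t1 u)) := rfl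
        _ ⊆ f.1 ⁻¹' (@closure T.X T.t1 (g.1 ⁻¹' u)) := Set.preimage_mono (gb u hu).1
        _ ⊆ @closure S.X S.t1 (f.1 ⁻¹' (g.1 ⁻¹' u)) :=
            preimage_closure_aux S.t1 T.t1 f.1 _ (fb _ hv).1
    · calc (g.1 ∘ f.1) ⁻¹' (@frontier U.X U.t2 uᶜ)
          = f.1 ⁻¹' (g.1 ⁻¹' (@frontier U.X U.t2 uᶜ)) := rfl
        _ ⊆ f.1 ⁻¹' (@closure T.X T.t2 (g.1 ⁻¹' uᶜ)) := Set.preimage_mono (gb u hu).2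
        _ ⊆ @closure S.X S.t2 (f.1 ⁻¹' (g.1 ⁻¹' uᶜ)) := by
            have := (fb _ hv).2
            rw [Set.preimage_compl] at this ⊢
            exact preimage_closure_aux S.t2 T.t2 f.1 _ this
  id_comp f := Subtype.ext rfl
  comp_id f := Subtype.ext rfl
  assoc f g h := Subtype.ext rfl
section Chunk1
namespace CRDSADual
open DoubleStoneAlgebra Set TopologicalSpace

variable {A : Type*} [CRDSA A]

lemma pstar_inf_self (x : A) : pstar x ⊓ x = ⊥ := (pstar_spec x (pstar x)).mpr le_rfl

lemma pplus_sup_self (x : A) : pplus x ⊔ x = ⊤ := (pplus_spec x (pplus x)).mpr le_rfl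

lemma pstar_bot : pstar (⊥ : A) = ⊤ :=
  top_le_iff.mp ((pstar_spec ⊥ ⊤).mp (by simp))

lemma pplus_top : pplus (⊤ : A) = ⊥ :=
  le_bot_iff.mp ((pplus_spec ⊤ ⊥).mp (by simp))

/-- A bounded lattice homomorphism into `Bool`. -/
def IsBLH {L : Type*} [Lattice L] [BoundedOrder L] (g : L → Bool) : Prop :=
  g ⊥ = false ∧ g ⊤ = true ∧ (∀ x y, g (x ⊓ y) = (g x && g y)) ∧ ∀ x y, g (x ⊔ y) = (g x || g y)

/-- The spectrum: points of the dual space of `A`. -/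
def Spec (A : Type*) [CRDSA A] : Type _ := {g : A → Bool // IsBLH g}

open Classical in
lemma exists_sep {x y : A} (h : ¬ x ≤ y) : ∃ g : Spec A, g.1 x = true ∧ g.1 y = false := by
  classical
  have hdisj : Disjoint (↑(Order.PFilter.principal x) : Set A)
      (↑(Order.Ideal.principal y) : Set A) := by
    rw [Set.disjoint_left]
    intro z hz hz'
    have h1 : x ≤ z := Order.PFilter.mem_principal.mp hz
    have h2 : z ≤ y := Order.Ideal.mem_principal.mp hz'
    exact h (h1.trans h2)
  obtain ⟨J, hJp, hIJ, hdJ⟩ := DistribLattice.prime_ideal_of_disjoint_filter_ideal hdisj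
  have hxJ : x ∉ (J : Set A) := Set.disjoint_left.mp hdJ (Order.PFilter.mem_principal.mpr le_rfl)
  have hyJ : y ∈ (J : Set A) := hIJ (Order.Ideal.mem_principal.mpr le_rfl)
  refine ⟨⟨fun z => decide (z ∉ (J : Set A)), ?_, ?_, ?_, ?_⟩, by simpa using hxJ, by simpa using hyJ⟩
  · simp [J.bot_mem]
  · simpa using fun h => hxJ (J.lower le_top h)
  · intro a b
    have : a ⊓ b ∉ (J : Set A) ↔ (a ∉ (J : Set A)) ∧ (b ∉ (J : Set A)) := by
      constructor
      · intro hab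
        exact ⟨fun ha => hab (J.lower inf_le_left ha), fun hb => hab (J.lower inf_le_right hb)⟩
      · intro ⟨ha, hb⟩ hab
        rcases hJp.mem_or_mem hab with h' | h' <;> [exact ha h'; exact hb h']
    by_cases ha : a ∈ (J : Set A) <;> by_cases hb : b ∈ (J : Set A) <;> simp_all
  · intro a b
    have : a ⊔ b ∈ (J : Set A) ↔ (a ∈ (J : Set A)) ∧ (b ∈ (J : Set A)) := by
      constructor
      · intro hab
        exact ⟨J.lower le_sup_left hab, J.lower le_sup_right hab⟩
      · intro ⟨ha, hb⟩
        exact J.sup_mem ha hb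
    by_cases ha : a ∈ (J : Set A) <;> by_cases hb : b ∈ (J : Set A) <;> simp_all

lemma g_mono (g : Spec A) {x y : A} (h : x ≤ y) (hx : g.1 x = true) : g.1 y = true := by
  have := g.2.2.2.2 x y
  rw [sup_eq_right.mpr h] at this
  rw [this, hx]
  simp

lemma le_of_forall_spec {x y : A} (h : ∀ g : Spec A, g.1 x = true → g.1 y = true) : x ≤ y := by
  by_contra hc
  obtain ⟨g, hgx, hgy⟩ := exists_sep hc
  simp [h g hgx] at hgy

end CRDSADual
end Chunk1
section Chunk2
namespace CRDSADual
open DoubleStoneAlgebra Set TopologicalSpace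

variable {X : Type*}

/-- Pairwise compactness predicate. -/
def PComp (t1 t2 : TopologicalSpace X) : Prop :=
  ∀ C : Set (Set X), (∀ u ∈ C, IsOpen[t1] u ∨ IsOpen[t2] u) →
    ⋃₀ C = Set.univ → ∃ F : Finset (Set X), ↑F ⊆ C ∧ ⋃₀ (↑F : Set (Set X)) = Set.univ

lemma PComp.symm {t1 t2 : TopologicalSpace X} (h : PComp t1 t2) : PComp t2 t1 :=
  fun C hC hcov => h C (fun u hu => (hC u hu).symm) hcov

lemma basis_of_generateFrom (S : Set (Set X)) (hu : Set.univ ∈ S)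
    (hi : ∀ u ∈ S, ∀ v ∈ S, u ∩ v ∈ S) :
    @IsTopologicalBasis X (generateFrom S) S := by
  letI : TopologicalSpace X := generateFrom S
  exact ⟨fun u hu' v hv' x hx => ⟨u ∩ v, hi u hu' v hv', hx, subset_rfl⟩,
    Set.eq_univ_of_univ_subset (subset_sUnion_of_mem hu), rfl⟩

lemma sUnion_finset_mem (S : Set (Set X)) (he : ∅ ∈ S)
    (hsu : ∀ u ∈ S, ∀ v ∈ S, u ∪ v ∈ S) :
    ∀ F : Finset (Set X), ↑F ⊆ S → ⋃₀ (↑F : Set (Set X)) ∈ S := by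
  intro F
  classical
  induction F using Finset.induction_on with
  | empty => intro _; simpa using he
  | @insert u F hu ih =>
      intro hFS
      rw [Finset.coe_insert, Set.sUnion_insert]
      have h1 : u ∈ S := hFS (Finset.mem_insert_self u F)
      have h2 : ⋃₀ (↑F : Set (Set X)) ∈ S := ih fun v hv => hFS (Finset.mem_insert_of_mem hv)
      exact hsu u h1 _ h2

lemma B1_eq_of (t1 t2 : TopologicalSpace X) (S : Set (Set X))
    (h1 : t1 = generateFrom S) (h2 : t2 = generateFrom (compl '' S))
    (hu : Set.univ ∈ S) (he : ∅ ∈ S)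
    (hi : ∀ u ∈ S, ∀ v ∈ S, u ∩ v ∈ S) (hsu : ∀ u ∈ S, ∀ v ∈ S, u ∪ v ∈ S)
    (pc : PComp t1 t2) : B1 t1 t2 = S := by
  apply Set.Subset.antisymm
  · rintro W ⟨hWo, hWc⟩
    -- W is t1-open: write it as a union of basic sets
    have hb1 : @IsTopologicalBasis X t1 S := h1 ▸ basis_of_generateFrom S hu hi
    have hb2 : @IsTopologicalBasis X t2 (compl '' S) := by
      refine h2 ▸ basis_of_generateFrom _ ⟨∅, he, by simp⟩ ?_
      rintro _ ⟨u, huS, rfl⟩ _ ⟨v, hvS, rfl⟩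
      exact ⟨u ∪ v, hsu u huS v hvS, by simp [Set.compl_union]⟩
    obtain ⟨S1, hS1, hWS1⟩ := @IsTopologicalBasis.open_eq_sUnion X t1 S hb1 W hWo
    have hWcop : IsOpen[t2] Wᶜ := @IsClosed.isOpen_compl X t2 W hWc
    obtain ⟨S2, hS2, hWS2⟩ := @IsTopologicalBasis.open_eq_sUnion X t2 _ hb2 _ hWcop
    have hcov : ⋃₀ (S1 ∪ S2) = Set.univ := by
      rw [Set.sUnion_union, ← hWS1, ← hWS2, Set.union_compl_self]
    have hops : ∀ u ∈ S1 ∪ S2, IsOpen[t1] u ∨ IsOpen[t2] u := by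
      intro u hu'
      rcases hu' with h | h
      · exact Or.inl (@IsTopologicalBasis.isOpen X t1 _ _ hb1 (hS1 h))
      · exact Or.inr (@IsTopologicalBasis.isOpen X t2 _ _ hb2 (hS2 h))
    obtain ⟨F, hFsub, hFcov⟩ := pc _ hops hcov
    classical
    set F1 : Finset (Set X) := F.filter (· ∈ S1) with hF1
    have hF1S : ↑F1 ⊆ S := by
      intro u hu'
      simp only [hF1, Finset.coe_filter, Set.mem_setOf_eq] at hu'
      exact hS1 hu'.2
    have hF1W : ⋃₀ (↑F1 : Set (Set X)) ⊆ W := by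
      apply Set.sUnion_subset
      intro u hu'
      simp only [hF1, Finset.coe_filter, Set.mem_setOf_eq] at hu'
      rw [hWS1]
      exact Set.subset_sUnion_of_mem hu'.2
    have hWF1 : W ⊆ ⋃₀ (↑F1 : Set (Set X)) := by
      intro x hxW
      have hxU : x ∈ ⋃₀ (↑F : Set (Set X)) := hFcov ▸ Set.mem_univ x
      obtain ⟨u, huF, hxu⟩ := hxU
      rcases hFsub huF with h | h
      · exact ⟨u, by simp [hF1, Finset.mem_coe, Finset.mem_filter, huF, h, Finset.mem_coe.mp huF], hxu⟩
      · exfalso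
        have : u ⊆ Wᶜ := hWS2 ▸ Set.subset_sUnion_of_mem h
        exact this hxu hxW
    have : W = ⋃₀ (↑F1 : Set (Set X)) := Set.Subset.antisymm hWF1 hF1W
    rw [this]
    exact sUnion_finset_mem S he hsu F1 hF1S
  · intro u huS
    refine ⟨h1 ▸ TopologicalSpace.GenerateOpen.basic u huS, @IsClosed.mk X t2 u ?_⟩
    exact h2 ▸ TopologicalSpace.GenerateOpen.basic _ ⟨u, huS, rfl⟩

lemma compl_image_invol (S : Set (Set X)) : compl '' (compl '' S) = S := by
  rw [Set.image_image]
  simp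

lemma B2_eq_of (t1 t2 : TopologicalSpace X) (S : Set (Set X))
    (h1 : t1 = generateFrom S) (h2 : t2 = generateFrom (compl '' S))
    (hu : Set.univ ∈ S) (he : ∅ ∈ S)
    (hi : ∀ u ∈ S, ∀ v ∈ S, u ∩ v ∈ S) (hsu : ∀ u ∈ S, ∀ v ∈ S, u ∪ v ∈ S)
    (pc : PComp t1 t2) : B2 t1 t2 = compl '' S := by
  have : B2 t1 t2 = B1 t2 t1 := rfl
  rw [this]
  refine B1_eq_of t2 t1 (compl '' S) h2 (by rw [compl_image_invol]; exact h1) ⟨∅, he, by simp⟩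
    ⟨Set.univ, hu, by simp⟩ ?_ ?_ pc.symm
  · rintro _ ⟨u, huS, rfl⟩ _ ⟨v, hvS, rfl⟩
    exact ⟨u ∪ v, hsu u huS v hvS, by simp [Set.compl_union]⟩
  · rintro _ ⟨u, huS, rfl⟩ _ ⟨v, hvS, rfl⟩
    exact ⟨u ∩ v, hi u huS v hvS, by simp [Set.compl_inter]⟩

end CRDSADual
end Chunk2
section Chunk3
namespace CRDSADual
open DoubleStoneAlgebra Set TopologicalSpace

variable {A : Type*} [CRDSA A]

instance : TopologicalSpace (Spec A) :=
  inferInstanceAs (TopologicalSpace {g : A → Bool // IsBLH g})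

lemma isClosed_IsBLH : IsClosed {g : A → Bool | IsBLH g} := by
  have heq : {g : A → Bool | IsBLH g} =
      ({g : A → Bool | g ⊥ = false} ∩ {g : A → Bool | g ⊤ = true} ∩
       (⋂ (x : A) (y : A), {g : A → Bool | g (x ⊓ y) = (g x && g y)}) ∩
       ⋂ (x : A) (y : A), {g : A → Bool | g (x ⊔ y) = (g x || g y)}) := by
    ext g
    simp only [IsBLH, Set.mem_setOf_eq, Set.mem_inter_iff, Set.mem_iInter]
    tauto
  rw [heq]
  have key : ∀ (a b c : A) (R : Bool → Bool → Bool → Prop),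
      IsClosed {g : A → Bool | R (g a) (g b) (g c)} := by
    intro a b c R
    have hc : Continuous (fun g : A → Bool => (g a, g b, g c)) :=
      (continuous_apply a).prodMk ((continuous_apply b).prodMk (continuous_apply c))
    have : {g : A → Bool | R (g a) (g b) (g c)} =
        (fun g : A → Bool => (g a, g b, g c)) ⁻¹' {p : Bool × Bool × Bool | R p.1 p.2.1 p.2.2} :=
      rfl
    rw [this]
    exact (isClosed_discrete _).preimage hc
  refine IsClosed.inter (IsClosed.inter (IsClosed.inter ?_ ?_) ?_) ?_
  · exact key ⊥ ⊥ ⊥ (fun p _ _ => p = false)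
  · exact key ⊤ ⊤ ⊤ (fun p _ _ => p = true)
  · exact isClosed_iInter fun x => isClosed_iInter fun y =>
      key (x ⊓ y) x y (fun p q r => p = (q && r))
  · exact isClosed_iInter fun x => isClosed_iInter fun y =>
      key (x ⊔ y) x y (fun p q r => p = (q || r))

instance : CompactSpace (Spec A) :=
  isCompact_iff_compactSpace.mp isClosed_IsBLH.isCompact

/-- Basic (cl)open sets of the spectrum. -/
def V (x : A) : Set (Spec A) := {g | g.1 x = true}

lemma V_bot : V (⊥ : A) = ∅ := by ext g; simp [V, g.2.1]
lemma V_top : V (⊤ : A) = Set.univ := by ext g; simp [V, g.2.2.1]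
lemma V_inf (x y : A) : V (x ⊓ y) = V x ∩ V y := by ext g; simp [V, g.2.2.2.1 x y]
lemma V_sup (x y : A) : V (x ⊔ y) = V x ∪ V y := by ext g; simp [V, g.2.2.2.2 x y]
lemma V_mono {x y : A} (h : x ≤ y) : V x ⊆ V y := fun g hg => g_mono g h hg
lemma V_subset_iff {x y : A} : V x ⊆ V y ↔ x ≤ y :=
  ⟨fun h => le_of_forall_spec fun g hg => h hg, V_mono⟩
lemma V_inj {x y : A} (h : V x = V y) : x = y :=
  le_antisymm (V_subset_iff.mp h.le) (V_subset_iff.mp h.ge)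

lemma compl_V_of {x y : A} (h1 : x ⊓ y = ⊥) (h2 : x ⊔ y = ⊤) : (V x)ᶜ = V y := by
  ext g
  have e1 : (g.1 x && g.1 y) = false := by rw [← g.2.2.2.1, h1, g.2.1]
  have e2 : (g.1 x || g.1 y) = true := by rw [← g.2.2.2.2, h2, g.2.2.1]
  simp only [Set.mem_compl_iff, V, Set.mem_setOf_eq]
  cases hx : g.1 x <;> cases hy : g.1 y <;> simp_all

lemma V_clopen (x : A) : IsClopen (V x) := by
  have heq : V x = (fun g : Spec A => g.1 x) ⁻¹' {true} := rfl
  have hc : Continuous (fun g : Spec A => g.1 x) :=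
    (continuous_apply x).comp continuous_subtype_val
  rw [heq]
  exact ⟨(isClosed_discrete _).preimage hc, (isOpen_discrete _).preimage hc⟩

/-- The two spectral topologies. -/
def t1 (A : Type*) [CRDSA A] : TopologicalSpace (Spec A) :=
  generateFrom (Set.range (V (A := A)))

def t2 (A : Type*) [CRDSA A] : TopologicalSpace (Spec A) :=
  generateFrom (compl '' Set.range (V (A := A)))

lemma isOpen_t1_V (x : A) : IsOpen[t1 A] (V x) :=
  TopologicalSpace.GenerateOpen.basic _ ⟨x, rfl⟩

lemma isOpen_t2_compl_V (x : A) : IsOpen[t2 A] (V x)ᶜ :=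
  TopologicalSpace.GenerateOpen.basic _ ⟨V x, ⟨x, rfl⟩, rfl⟩

lemma inst_le_t1 : (inferInstance : TopologicalSpace (Spec A)) ≤ t1 A :=
  le_generateFrom (by rintro _ ⟨x, rfl⟩; exact (V_clopen x).2)

lemma inst_le_t2 : (inferInstance : TopologicalSpace (Spec A)) ≤ t2 A :=
  le_generateFrom (by rintro _ ⟨_, ⟨x, rfl⟩, rfl⟩; exact (V_clopen x).1.isOpen_compl)

lemma pcomp_spec : PComp (t1 A) (t2 A) := by
  intro C hC hcov
  have hop : ∀ u ∈ C, IsOpen u := by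
    intro u hu
    rcases hC u hu with h | h
    · exact h.mono inst_le_t1
    · exact h.mono inst_le_t2
  obtain ⟨t, ht⟩ := isCompact_univ.elim_finite_subcover (fun c : C => (c : Set (Spec A)))
    (fun c => hop c c.2) (by rw [← Set.sUnion_eq_iUnion, hcov])
  classical
  refine ⟨t.image Subtype.val, ?_, ?_⟩
  · intro u hu
    simp only [Finset.coe_image, Set.mem_image] at hu
    obtain ⟨c, _, rfl⟩ := hu
    exact c.2
  · apply Set.eq_univ_of_univ_subset
    intro x hx
    have hx2 : x ∈ ⋃ i ∈ t, (fun c : C => (c : Set (Spec A))) i := ht hx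
    simp only [Set.mem_iUnion] at hx2
    obtain ⟨c, hct, hxc⟩ := hx2
    exact ⟨c.1, Finset.mem_coe.mpr (Finset.mem_image_of_mem Subtype.val hct), hxc⟩

lemma B1_spec : B1 (t1 A) (t2 A) = Set.range (V (A := A)) :=
  B1_eq_of _ _ _ rfl rfl ⟨⊤, V_top⟩ ⟨⊥, V_bot⟩
    (by rintro _ ⟨x, rfl⟩ _ ⟨y, rfl⟩; exact ⟨x ⊓ y, V_inf x y⟩)
    (by rintro _ ⟨x, rfl⟩ _ ⟨y, rfl⟩; exact ⟨x ⊔ y, V_sup x y⟩)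
    pcomp_spec

lemma B2_spec : B2 (t1 A) (t2 A) = compl '' Set.range (V (A := A)) :=
  B2_eq_of _ _ _ rfl rfl ⟨⊤, V_top⟩ ⟨⊥, V_bot⟩
    (by rintro _ ⟨x, rfl⟩ _ ⟨y, rfl⟩; exact ⟨x ⊓ y, V_inf x y⟩)
    (by rintro _ ⟨x, rfl⟩ _ ⟨y, rfl⟩; exact ⟨x ⊔ y, V_sup x y⟩)
    pcomp_spec

lemma basisV : @IsTopologicalBasis (Spec A) (t1 A) (Set.range (V (A := A))) :=
  basis_of_generateFrom _ ⟨⊤, V_top⟩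
    (by rintro _ ⟨x, rfl⟩ _ ⟨y, rfl⟩; exact ⟨x ⊓ y, V_inf x y⟩)

lemma basisVc : @IsTopologicalBasis (Spec A) (t2 A) (compl '' Set.range (V (A := A))) :=
  basis_of_generateFrom _ ⟨∅, ⟨⊥, V_bot⟩, by simp⟩
    (by rintro _ ⟨_, ⟨x, rfl⟩, rfl⟩ _ ⟨_, ⟨y, rfl⟩, rfl⟩
        rw [show (V x)ᶜ ∩ (V y)ᶜ = (V (x ⊔ y))ᶜ by rw [V_sup, Set.compl_union]]
        exact Set.mem_image_of_mem _ ⟨x ⊔ y, rfl⟩)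

lemma basis1_spec : @IsTopologicalBasis (Spec A) (t1 A) (B1 (t1 A) (t2 A)) := by
  rw [B1_spec]; exact basisV

lemma basis2_spec : @IsTopologicalBasis (Spec A) (t2 A) (B2 (t1 A) (t2 A)) := by
  rw [B2_spec]; exact basisVc

lemma int1_compl_V (x : A) : @interior _ (t1 A) (V x)ᶜ = V (pstar x) := by
  apply Set.Subset.antisymm
  · intro g hg
    obtain ⟨u, ⟨y, rfl⟩, hgu, hsub⟩ :=
      @IsTopologicalBasis.exists_subset_of_mem_open (Spec A) (t1 A) _ basisV g _ hg
        (@isOpen_interior _ (t1 A) _)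
    have hsub' : V y ⊆ (V x)ᶜ := hsub.trans (@interior_subset _ (t1 A) _)
    have hyx : y ⊓ x = ⊥ := by
      by_contra hc
      obtain ⟨h, hh, _⟩ := exists_sep (y := (⊥ : A)) (fun hle => hc (le_bot_iff.mp hle))
      have hmem : h ∈ V y ∩ V x := by rw [← V_inf]; exact hh
      exact hsub' hmem.1 hmem.2
    exact V_mono ((pstar_spec x y).mp hyx) hgu
  · refine @interior_maximal _ (t1 A) _ _ ?_ (isOpen_t1_V _)
    intro g hg hgx
    have hmem : g ∈ V (pstar x) ∩ V x := ⟨hg, hgx⟩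
    rw [← V_inf, pstar_inf_self, V_bot] at hmem
    exact hmem

lemma int2_V (x : A) : @interior _ (t2 A) (V x) = (V (pplus x))ᶜ := by
  apply Set.Subset.antisymm
  · intro g hg
    obtain ⟨u, ⟨_, ⟨y, rfl⟩, rfl⟩, hgu, hsub⟩ :=
      @IsTopologicalBasis.exists_subset_of_mem_open (Spec A) (t2 A) _ basisVc g _ hg
        (@isOpen_interior _ (t2 A) _)
    have hsub' : (V y)ᶜ ⊆ V x := hsub.trans (@interior_subset _ (t2 A) _)
    have hxy : x ⊔ y = ⊤ := by
      by_contra hc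
      obtain ⟨h, _, hh⟩ := exists_sep (x := (⊤ : A)) (fun hle => hc (top_le_iff.mp hle))
      have hor := h.2.2.2.2 x y
      rw [hh] at hor
      obtain ⟨hx, hy⟩ := Bool.or_eq_false_iff.mp hor.symm
      have hmem : h ∈ V x := hsub' (by simp [V, hy])
      simp only [V, Set.mem_setOf_eq, hx] at hmem
      exact Bool.false_ne_true hmem
    have hle : pplus x ≤ y := (pplus_spec x y).mp (by rwa [sup_comm])
    exact fun hgm => hgu (g_mono g hle hgm)
  · refine @interior_maximal _ (t2 A) _ _ ?_ (isOpen_t2_compl_V _)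
    intro g hg
    have hor := g.2.2.2.2 (pplus x) x
    rw [pplus_sup_self, g.2.2.1] at hor
    simp only [Set.mem_compl_iff, V, Set.mem_setOf_eq] at hg ⊢
    cases hgx : g.1 x <;> simp_all

lemma cl1_V (x : A) : @closure _ (t1 A) (V x) = (V (pstar x))ᶜ := by
  rw [@closure_eq_compl_interior_compl _ (t1 A) _, int1_compl_V]

lemma cl2_compl_V (x : A) : @closure _ (t2 A) (V x)ᶜ = V (pplus x) := by
  rw [@closure_compl _ (t2 A) _, int2_V, compl_compl]

lemma frontier1_V (x : A) : @frontier _ (t1 A) (V x) = (V (pstar x))ᶜ \ V x := by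
  have h : @frontier _ (t1 A) (V x) =
      @closure _ (t1 A) (V x) \ @interior _ (t1 A) (V x) := rfl
  rw [h, cl1_V, @IsOpen.interior_eq _ (t1 A) _ (isOpen_t1_V x)]

lemma frontier2_compl_V (x : A) : @frontier _ (t2 A) (V x)ᶜ = V (pplus x) \ (V x)ᶜ := by
  have h : @frontier _ (t2 A) (V x)ᶜ =
      @closure _ (t2 A) (V x)ᶜ \ @interior _ (t2 A) (V x)ᶜ := rfl
  rw [h, cl2_compl_V, @IsOpen.interior_eq _ (t2 A) _ (isOpen_t2_compl_V x)]

lemma compl_V_pstar (x : A) : (V (pstar x))ᶜ = V (pstar (pstar x)) :=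
  compl_V_of (by rw [inf_comm]; exact pstar_inf_self (pstar x)) (DoubleStoneAlgebra.stone x)

lemma compl_V_pplus (x : A) : (V (pplus (pplus x)))ᶜ = V (pplus x) :=
  compl_V_of (by rw [inf_comm]; exact DoubleStoneAlgebra.stone_dual x)
    (pplus_sup_self (pplus x))

/-- The dual space of a CRDSA. -/
def SpecSpace (A : Type) [CRDSA A] : CRDPStoneSpace where
  X := Spec A
  t1 := t1 A
  t2 := t2 A
  pairwise_compact := pcomp_spec
  pairwise_hausdorff := by
    intro g h hne
    have hex : ∃ x : A, g.1 x ≠ h.1 x := by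
      by_contra hc
      push_neg at hc
      exact hne (Subtype.ext (funext hc))
    obtain ⟨x, hx⟩ := hex
    cases hgx : g.1 x
    · have hhx : h.1 x = true := by cases hhx : h.1 x <;> simp_all
      exact ⟨(V x)ᶜ, V x, disjoint_compl_left, by simp [V, hgx], hhx,
        Or.inr ⟨isOpen_t2_compl_V x, isOpen_t1_V x⟩⟩
    · have hhx : h.1 x = false := by cases hhx : h.1 x <;> simp_all
      exact ⟨V x, (V x)ᶜ, disjoint_compl_right, hgx, by simp [V, hhx],
        Or.inl ⟨isOpen_t1_V x, isOpen_t2_compl_V x⟩⟩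
  basis1 := basis1_spec
  basis2 := basis2_spec
  cond1 := by
    intro v hv
    rw [B2_spec] at hv
    obtain ⟨_, ⟨x, rfl⟩, rfl⟩ := hv
    rw [int1_compl_V, B1_spec]
    exact ⟨pstar x, rfl⟩
  cond2 := by
    intro u hu
    rw [B1_spec] at hu
    obtain ⟨x, rfl⟩ := hu
    rw [int2_V, B2_spec]
    exact ⟨V (pplus x), ⟨pplus x, rfl⟩, rfl⟩
  cond3 := by
    intro u hu
    rw [B1_spec] at hu
    obtain ⟨x, rfl⟩ := hu
    rw [cl1_V, compl_compl]
    refine ⟨@IsClosed.mk _ (t1 A) _ ?_, isOpen_t1_V _⟩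
    rw [compl_V_pstar]
    exact isOpen_t1_V _
  cond4 := by
    intro u hu
    rw [B1_spec] at hu
    obtain ⟨x, rfl⟩ := hu
    rw [cl2_compl_V]
    refine ⟨@IsClosed.mk _ (t2 A) _ ?_, isOpen_t2_compl_V _⟩
    rw [compl_compl, ← compl_V_pplus]
    exact isOpen_t2_compl_V _
  cond5 := by
    intro u hu w hw h1 h2
    rw [B1_spec] at hu hw
    obtain ⟨x, rfl⟩ := hu
    obtain ⟨y, rfl⟩ := hw
    rw [cl1_V, cl1_V] at h1
    rw [int2_V, int2_V] at h2
    have hs : pstar x = pstar y := V_inj (by simpa using congrArg compl h1)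
    have hp : pplus x = pplus y := V_inj (by simpa using congrArg compl h2)
    rw [CRDSA.regular x y hs hp]
  cond6 := by
    obtain ⟨k, hk1, hk2⟩ := CRDSA.core_nonempty (α := A)
    refine ⟨V k, ?_, ?_, ?_⟩
    · rw [B1_spec]; exact ⟨k, rfl⟩
    · rw [frontier1_V, hk1, V_bot]
      simp [Set.compl_eq_univ_diff]
    · rw [frontier2_compl_V, hk2, V_top]
      rw [Set.diff_eq, compl_compl, Set.univ_inter]

end CRDSADual
end Chunk3
section Chunk4
namespace CRDSADual
open DoubleStoneAlgebra Set TopologicalSpace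

variable {X : Type*} {ta tb : TopologicalSpace X}

lemma B1.inter {u v : Set X} (hu : u ∈ B1 ta tb) (hv : v ∈ B1 ta tb) : u ∩ v ∈ B1 ta tb :=
  ⟨@IsOpen.inter _ ta _ _ hu.1 hv.1, @IsClosed.inter _ _ _ tb hu.2 hv.2⟩

lemma B1.union {u v : Set X} (hu : u ∈ B1 ta tb) (hv : v ∈ B1 ta tb) : u ∪ v ∈ B1 ta tb :=
  ⟨@IsOpen.union _ _ _ ta hu.1 hv.1, @IsClosed.union _ _ _ tb hu.2 hv.2⟩

lemma B1.empty : (∅ : Set X) ∈ B1 ta tb := ⟨@isOpen_empty _ ta, @isClosed_empty _ tb⟩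

lemma B1.univ : (Set.univ : Set X) ∈ B1 ta tb := ⟨@isOpen_univ _ ta, @isClosed_univ _ tb⟩

lemma B1.compl_mem_B2 {u : Set X} (hu : u ∈ B1 ta tb) : uᶜ ∈ B2 ta tb :=
  ⟨@IsClosed.isOpen_compl _ tb _ hu.2, @IsOpen.isClosed_compl _ ta _ hu.1⟩

lemma B2.compl_mem_B1 {u : Set X} (hu : u ∈ B2 ta tb) : uᶜ ∈ B1 ta tb :=
  ⟨@IsClosed.isOpen_compl _ ta _ hu.2, @IsOpen.isClosed_compl _ tb _ hu.1⟩

/-- The algebra of `t1`-open, `t2`-closed sets of a core regular double pairwise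
Stone space. -/
def B1Alg (S : CRDPStoneSpace) : Type := {u : Set S.X // u ∈ B1 S.t1 S.t2}

namespace B1Alg

variable {S : CRDPStoneSpace}

instance : Max (B1Alg S) := ⟨fun u v => ⟨u.1 ∪ v.1, B1.union u.2 v.2⟩⟩
instance : Min (B1Alg S) := ⟨fun u v => ⟨u.1 ∩ v.1, B1.inter u.2 v.2⟩⟩

instance : LE (B1Alg S) := ⟨fun u v => u.1 ≤ v.1⟩
instance : LT (B1Alg S) := ⟨fun u v => u.1 < v.1⟩

instance : DistribLattice (B1Alg S) :=
  Function.Injective.distribLattice Subtype.val Subtype.val_injective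
    Iff.rfl Iff.rfl (fun _ _ => rfl) (fun _ _ => rfl)

instance : BoundedOrder (B1Alg S) where
  top := ⟨Set.univ, B1.univ⟩
  bot := ⟨∅, B1.empty⟩
  le_top u := (Set.subset_univ u.1 : u.1 ⊆ Set.univ)
  bot_le u := (Set.empty_subset u.1 : (∅ : Set S.X) ⊆ u.1)

lemma le_iff {u v : B1Alg S} : u ≤ v ↔ u.1 ⊆ v.1 := Iff.rfl
lemma inf_val (u v : B1Alg S) : (u ⊓ v).1 = u.1 ∩ v.1 := rfl
lemma sup_val (u v : B1Alg S) : (u ⊔ v).1 = u.1 ∪ v.1 := rfl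
lemma bot_val : ((⊥ : B1Alg S)).1 = (∅ : Set S.X) := rfl
lemma top_val : ((⊤ : B1Alg S)).1 = (Set.univ : Set S.X) := rfl

instance instCRDSA : CRDSA (B1Alg S) where
  pstar u := ⟨@interior _ S.t1 u.1ᶜ, S.cond1 u.1ᶜ (B1.compl_mem_B2 u.2)⟩
  pplus u := ⟨@closure _ S.t2 u.1ᶜ, by
    rw [@closure_compl _ S.t2 _]
    exact B2.compl_mem_B1 (S.cond2 u.1 u.2)⟩
  pstar_spec := by
    intro u w
    constructor
    · intro h
      have hval : w.1 ∩ u.1 = ∅ := congrArg Subtype.val h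
      have hsub : w.1 ⊆ u.1ᶜ := by
        intro z hz hzu
        exact absurd (hval ▸ (⟨hz, hzu⟩ : z ∈ w.1 ∩ u.1)) (Set.notMem_empty z)
      exact @interior_maximal _ S.t1 _ _ hsub w.2.1
    · intro h
      apply Subtype.ext
      rw [inf_val, bot_val]
      apply Set.eq_empty_iff_forall_notMem.mpr
      rintro z ⟨hzw, hzu⟩
      have hIS : @interior _ S.t1 u.1ᶜ ⊆ u.1ᶜ := fun a ha => @interior_subset _ S.t1 _ a ha
      exact hIS (h hzw) hzu
  pplus_spec := by
    intro u w
    constructor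
    · intro h
      have hval : w.1 ∪ u.1 = Set.univ := congrArg Subtype.val h
      have hsub : u.1ᶜ ⊆ w.1 := by
        intro z hz
        rcases (hval ▸ Set.mem_univ z : z ∈ w.1 ∪ u.1) with h' | h'
        · exact h'
        · exact absurd h' hz
      exact @closure_minimal _ S.t2 _ _ hsub w.2.2
    · intro h
      apply Subtype.ext
      rw [sup_val, top_val]
      apply Set.eq_univ_of_univ_subset
      intro z _
      by_cases hz : z ∈ u.1
      · exact Or.inr hz
      · have hSC : u.1ᶜ ⊆ @closure _ S.t2 u.1ᶜ := fun a ha => @subset_closure _ S.t2 _ a ha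
        exact Or.inl (h (hSC hz))
  stone := by
    intro u
    apply Subtype.ext
    show @interior _ S.t1 u.1ᶜ ∪ @interior _ S.t1 (@interior _ S.t1 u.1ᶜ)ᶜ = Set.univ
    rw [@interior_compl _ S.t1 _, compl_compl]
    have hclopen := S.cond3 u.1 u.2
    have hopen : IsOpen[S.t1] (@closure _ S.t1 u.1) := by
      have := hclopen.1.isOpen_compl
      rwa [compl_compl] at this
    rw [@IsOpen.interior_eq _ S.t1 _ hopen]
    exact compl_union_self _
  stone_dual := by
    intro u
    apply Subtype.ext
    show @closure _ S.t2 u.1ᶜ ∩ @closure _ S.t2 (@closure _ S.t2 u.1ᶜ)ᶜ = ∅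
    have hclopen := S.cond4 u.1 u.2
    rw [@IsClosed.closure_eq _ S.t2 _ hclopen.1]
    exact Set.inter_compl_self _
  regular := by
    intro u w h1 h2
    have hv1 : @interior _ S.t1 u.1ᶜ = @interior _ S.t1 w.1ᶜ := congrArg Subtype.val h1
    have hv2 : @closure _ S.t2 u.1ᶜ = @closure _ S.t2 w.1ᶜ := congrArg Subtype.val h2
    rw [@interior_compl _ S.t1 _, @interior_compl _ S.t1 _] at hv1
    rw [@closure_compl _ S.t2 _, @closure_compl _ S.t2 _] at hv2
    apply Subtype.ext
    exact S.cond5 u.1 u.2 w.1 w.2 (compl_injective hv1) (compl_injective hv2)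
  core_nonempty := by
    obtain ⟨u, hu, hf1, hf2⟩ := S.cond6
    have huo : @interior _ S.t1 u = u := @IsOpen.interior_eq _ S.t1 _ hu.1
    have hco : @interior _ S.t2 uᶜ = uᶜ := @IsOpen.interior_eq _ S.t2 _ hu.2.isOpen_compl
    have hcl1 : @closure _ S.t1 u = Set.univ := by
      apply Set.eq_univ_of_univ_subset
      intro z _
      by_cases hz : z ∈ u
      · exact @subset_closure _ S.t1 _ z hz
      · have hzf : z ∈ @frontier _ S.t1 u := by rw [hf1]; exact hz
        exact hzf.1
    have hcl2 : @closure _ S.t2 uᶜ = Set.univ := by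
      apply Set.eq_univ_of_univ_subset
      intro z _
      by_cases hz : z ∈ u
      · have hzf : z ∈ @frontier _ S.t2 uᶜ := by rw [hf2]; exact hz
        exact hzf.1
      · exact @subset_closure _ S.t2 _ z hz
    refine ⟨⟨u, hu⟩, Subtype.ext ?_, Subtype.ext ?_⟩
    · show @interior _ S.t1 uᶜ = ∅
      rw [@interior_compl _ S.t1 _, hcl1, Set.compl_univ]
    · show @closure _ S.t2 uᶜ = Set.univ
      exact hcl2

lemma pstar_val (u : B1Alg S) : (pstar u).1 = @interior _ S.t1 u.1ᶜ := rfl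
lemma pplus_val (u : B1Alg S) : (pplus u).1 = @closure _ S.t2 u.1ᶜ := rfl

end B1Alg
end CRDSADual
end Chunk4
section Chunk5
namespace CRDSADual
open DoubleStoneAlgebra Set TopologicalSpace CategoryTheory Opposite

/-! Morphism lemmas for spaces -/

variable {S T : CRDPStoneSpace}

lemma map_preimage_mem_B1 {f : S.X → T.X} (hf : IsCRDPStoneMap S T f)
    {u : Set T.X} (hu : u ∈ B1 T.t1 T.t2) : f ⁻¹' u ∈ B1 S.t1 S.t2 :=
  ⟨@Continuous.isOpen_preimage S.X T.X S.t1 T.t1 f hf.1 u hu.1,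
   @IsClosed.preimage S.X T.X S.t2 T.t2 f hf.2.1 u hu.2⟩

lemma map_closure1 {f : S.X → T.X} (hf : IsCRDPStoneMap S T f)
    {u : Set T.X} (hu : u ∈ B1 T.t1 T.t2) :
    @closure _ S.t1 (f ⁻¹' u) = f ⁻¹' (@closure _ T.t1 u) := by
  apply Set.Subset.antisymm
  · exact @Continuous.closure_preimage_subset S.X T.X S.t1 T.t1 f hf.1 u
  · exact preimage_closure_aux S.t1 T.t1 f u (hf.2.2 u hu).1

lemma map_closure2 {f : S.X → T.X} (hf : IsCRDPStoneMap S T f)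
    {u : Set T.X} (hu : u ∈ B1 T.t1 T.t2) :
    @closure _ S.t2 (f ⁻¹' uᶜ) = f ⁻¹' (@closure _ T.t2 uᶜ) := by
  apply Set.Subset.antisymm
  · exact @Continuous.closure_preimage_subset S.X T.X S.t2 T.t2 f hf.2.1 uᶜ
  · exact preimage_closure_aux S.t2 T.t2 f uᶜ (hf.2.2 u hu).2

/-- The algebra homomorphism `B1Alg S → B1Alg T` induced by a morphism `f : T ⟶ S`. -/
def B1Map {f : S.X → T.X} (hf : IsCRDPStoneMap S T f) (u : B1Alg T) : B1Alg S :=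
  ⟨f ⁻¹' u.1, map_preimage_mem_B1 hf u.2⟩

lemma B1Map_hom {f : S.X → T.X} (hf : IsCRDPStoneMap S T f) :
    IsCRDSAHom (B1Map hf) := by
  refine ⟨fun u v => Subtype.ext rfl, fun u v => Subtype.ext rfl, ?_, ?_,
    Subtype.ext rfl, Subtype.ext rfl⟩
  · intro u
    apply Subtype.ext
    show f ⁻¹' (@interior _ T.t1 u.1ᶜ) = @interior _ S.t1 (f ⁻¹' u.1)ᶜ
    rw [@interior_compl _ T.t1 _, @interior_compl _ S.t1 _, map_closure1 hf u.2,
      Set.preimage_compl]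
  · intro u
    apply Subtype.ext
    show f ⁻¹' (@closure _ T.t2 u.1ᶜ) = @closure _ S.t2 (f ⁻¹' u.1)ᶜ
    rw [← Set.preimage_compl, map_closure2 hf u.2]

/-! The spectrum functor on morphisms -/

variable {A B C : Type*} [CRDSA A] [CRDSA B] [CRDSA C]

/-- The continuous map `Spec B → Spec A` induced by a CRDSA homomorphism `h : A → B`. -/
def SpecMap (h : A → B) (hh : IsCRDSAHom h) (g : Spec B) : Spec A :=
  ⟨fun x => g.1 (h x),
    by show g.1 (h ⊥) = false; rw [hh.2.2.2.2.1]; exact g.2.1,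
    by show g.1 (h ⊤) = true; rw [hh.2.2.2.2.2]; exact g.2.2.1,
    fun x y => by show g.1 (h (x ⊓ y)) = _; rw [hh.2.1]; exact g.2.2.2.1 _ _,
    fun x y => by show g.1 (h (x ⊔ y)) = _; rw [hh.1]; exact g.2.2.2.2 _ _⟩

lemma SpecMap_preimage_V (h : A → B) (hh : IsCRDSAHom h) (x : A) :
    SpecMap h hh ⁻¹' V x = V (h x) := rfl

lemma SpecMap_continuous1 (h : A → B) (hh : IsCRDSAHom h) :
    Continuous[t1 B, t1 A] (SpecMap h hh) := by
  refine continuous_generateFrom_iff.mpr ?_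
  rintro _ ⟨x, rfl⟩
  exact isOpen_t1_V (h x)

lemma SpecMap_continuous2 (h : A → B) (hh : IsCRDSAHom h) :
    Continuous[t2 B, t2 A] (SpecMap h hh) := by
  refine continuous_generateFrom_iff.mpr ?_
  rintro _ ⟨_, ⟨x, rfl⟩, rfl⟩
  exact isOpen_t2_compl_V (h x)

lemma SpecMap_isMap {A B : Type} [CRDSA A] [CRDSA B] (h : A → B) (hh : IsCRDSAHom h) :
    IsCRDPStoneMap (SpecSpace B) (SpecSpace A) (SpecMap h hh) := by
  refine ⟨SpecMap_continuous1 h hh, SpecMap_continuous2 h hh, ?_⟩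
  intro u hu
  have hu' : u ∈ B1 (t1 A) (t2 A) := hu
  rw [B1_spec] at hu'
  obtain ⟨x, rfl⟩ := hu'
  constructor
  · show SpecMap h hh ⁻¹' (@frontier _ (t1 A) (V x)) ⊆
      @closure _ (t1 B) (SpecMap h hh ⁻¹' (V x))
    rw [frontier1_V, SpecMap_preimage_V, cl1_V]
    intro g hg
    have hg1 : g ∈ SpecMap h hh ⁻¹' (V (pstar x))ᶜ := fun hc => hg.1 hc
    rw [show (SpecMap h hh ⁻¹' (V (pstar x))ᶜ) = (V (h (pstar x)))ᶜ from rfl] at hg1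
    rwa [hh.2.2.1 x] at hg1
  · show SpecMap h hh ⁻¹' (@frontier _ (t2 A) (V x)ᶜ) ⊆
      @closure _ (t2 B) (SpecMap h hh ⁻¹' (V x)ᶜ)
    rw [frontier2_compl_V]
    rw [show (SpecMap h hh ⁻¹' (V x)ᶜ) = (V (h x))ᶜ from rfl, cl2_compl_V]
    intro g hg
    have hg1 : g ∈ SpecMap h hh ⁻¹' (V (pplus x)) := hg.1
    rw [show (SpecMap h hh ⁻¹' (V (pplus x))) = V (h (pplus x)) from rfl] at hg1
    rwa [hh.2.2.2.1 x] at hg1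

/-! The two functors -/

/-- The contravariant spectrum functor. -/
def Fdual : CRDSACat ⥤ CRDPStoneSpaceᵒᵖ where
  obj A := op (SpecSpace A.carrier)
  map {A B} h :=
    (Quiver.Hom.op (⟨SpecMap h.1 h.2, SpecMap_isMap h.1 h.2⟩ :
      (SpecSpace B.carrier) ⟶ (SpecSpace A.carrier)))
  map_id A := by
    apply Quiver.Hom.unop_inj
    exact Subtype.ext rfl
  map_comp {A B C} f g := by
    apply Quiver.Hom.unop_inj
    exact Subtype.ext rfl

/-- The contravariant `B1`-algebra functor. -/
def Gdual : CRDPStoneSpaceᵒᵖ ⥤ CRDSACat where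
  obj S := ⟨B1Alg S.unop⟩
  map {S T} f := ⟨B1Map f.unop.2, B1Map_hom f.unop.2⟩
  map_id S := by
    apply Subtype.ext
    funext u
    exact Subtype.ext rfl
  map_comp {S T U} f g := by
    apply Subtype.ext
    funext u
    exact Subtype.ext rfl

end CRDSADual
end Chunk5
section Chunk6
namespace CRDSADual
open DoubleStoneAlgebra Set TopologicalSpace CategoryTheory Opposite

/-! Bijective CRDSA homs are isomorphisms -/

noncomputable def invHom {A B : CRDSACat} (f : A ⟶ B)
    (hb : Function.Bijective f.1) : B ⟶ A := by
  refine ⟨(Equiv.ofBijective f.1 hb).symm, ?_, ?_, ?_, ?_, ?_, ?_⟩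
  all_goals
    obtain ⟨h1, h2, h3, h4, h5, h6⟩ := f.2
  all_goals
    have key : ∀ z, f.1 ((Equiv.ofBijective f.1 hb).symm z) = z :=
      fun z => (Equiv.ofBijective f.1 hb).apply_symm_apply z
  · intro x y; apply hb.1; rw [key, h1, key, key]
  · intro x y; apply hb.1; rw [key, h2, key, key]
  · intro x; apply hb.1; rw [key, h3, key]
  · intro x; apply hb.1; rw [key, h4, key]
  · apply hb.1; rw [key, h5]
  · apply hb.1; rw [key, h6]

noncomputable def isoOfBijective {A B : CRDSACat} (f : A ⟶ B)
    (hb : Function.Bijective f.1) : A ≅ B where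
  hom := f
  inv := invHom f hb
  hom_inv_id := Subtype.ext (funext fun x => (Equiv.ofBijective f.1 hb).symm_apply_apply x)
  inv_hom_id := Subtype.ext (funext fun z => (Equiv.ofBijective f.1 hb).apply_symm_apply z)

/-! The unit -/

def etaHom (A : CRDSACat) : A ⟶ (Fdual ⋙ Gdual).obj A := by
  refine ⟨fun x => ⟨V x, ?_⟩, ?_, ?_, ?_, ?_, ?_, ?_⟩
  · show V x ∈ B1 (t1 A.carrier) (t2 A.carrier)
    rw [B1_spec]
    exact ⟨x, rfl⟩
  · intro x y; exact Subtype.ext (V_sup x y)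
  · intro x y; exact Subtype.ext (V_inf x y)
  · intro x
    apply Subtype.ext
    show V (pstar x) = @interior _ (t1 A.carrier) (V x)ᶜ
    exact (int1_compl_V x).symm
  · intro x
    apply Subtype.ext
    show V (pplus x) = @closure _ (t2 A.carrier) (V x)ᶜ
    exact (cl2_compl_V x).symm
  · exact Subtype.ext V_bot
  · exact Subtype.ext V_top

lemma etaHom_bijective (A : CRDSACat) : Function.Bijective (etaHom A).1 := by
  constructor
  · intro x y hxy
    exact V_inj (congrArg Subtype.val hxy)
  · intro u
    have hu : u.1 ∈ B1 (t1 A.carrier) (t2 A.carrier) := u.2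
    rw [B1_spec] at hu
    obtain ⟨x, hx⟩ := hu
    exact ⟨x, Subtype.ext hx⟩

noncomputable def unitIso : 𝟭 CRDSACat ≅ Fdual ⋙ Gdual := by
  refine NatIso.ofComponents (fun A => isoOfBijective (etaHom A) (etaHom_bijective A)) ?_
  intro A B h
  apply Subtype.ext
  funext x
  exact Subtype.ext rfl

/-! The counit -/

attribute [local instance] Classical.propDecidable

/-- The evaluation map `S.X → Spec (B1Alg S)`. -/
noncomputable def epsFun (S : CRDPStoneSpace) (z : S.X) : Spec (B1Alg S) := by
  refine ⟨fun u => decide (z ∈ u.1), ?_, ?_, ?_, ?_⟩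
  · simp only [decide_eq_false_iff_not]
    exact Set.notMem_empty z
  · simp only [decide_eq_true_eq]
    exact Set.mem_univ z
  · intro u v
    by_cases h1 : z ∈ u.1 <;> by_cases h2 : z ∈ v.1 <;>
      simp [B1Alg.inf_val, Set.mem_inter_iff, h1, h2]
  · intro u v
    by_cases h1 : z ∈ u.1 <;> by_cases h2 : z ∈ v.1 <;>
      simp [B1Alg.sup_val, Set.mem_union, h1, h2]

variable {S : CRDPStoneSpace}

lemma epsFun_preimage_V (u : B1Alg S) : epsFun S ⁻¹' (V u) = u.1 := by
  ext z
  show decide (z ∈ u.1) = true ↔ z ∈ u.1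
  exact decide_eq_true_iff

lemma epsFun_preimage_V_compl (u : B1Alg S) : epsFun S ⁻¹' (V u)ᶜ = u.1ᶜ := by
  rw [Set.preimage_compl, epsFun_preimage_V]

lemma cl1_val (u : B1Alg S) : @closure _ S.t1 u.1 = (pstar (pstar u)).1 := by
  show _ = @interior _ S.t1 (@interior _ S.t1 u.1ᶜ)ᶜ
  have h1 : @interior _ S.t1 u.1ᶜ = (@closure _ S.t1 u.1)ᶜ := @interior_compl _ S.t1 _
  rw [h1, compl_compl]
  have hopen : IsOpen[S.t1] (@closure _ S.t1 u.1) := by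
    have := (S.cond3 u.1 u.2).1.isOpen_compl
    rwa [compl_compl] at this
  rw [@IsOpen.interior_eq _ S.t1 _ hopen]

lemma cl2_compl_val (u : B1Alg S) : @closure _ S.t2 u.1ᶜ = (pplus u).1 := rfl

lemma epsFun_isMap : IsCRDPStoneMap S (SpecSpace (B1Alg S)) (epsFun S) := by
  refine ⟨?_, ?_, ?_⟩
  · show Continuous[S.t1, t1 (B1Alg S)] (epsFun S)
    refine continuous_generateFrom_iff.mpr ?_
    rintro _ ⟨u, rfl⟩
    rw [epsFun_preimage_V]
    exact u.2.1
  · show Continuous[S.t2, t2 (B1Alg S)] (epsFun S)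
    refine continuous_generateFrom_iff.mpr ?_
    rintro _ ⟨_, ⟨u, rfl⟩, rfl⟩
    rw [epsFun_preimage_V_compl]
    exact @IsClosed.isOpen_compl _ S.t2 _ u.2.2
  · intro w hw
    have hw' : w ∈ B1 (t1 (B1Alg S)) (t2 (B1Alg S)) := hw
    rw [B1_spec] at hw'
    obtain ⟨u, rfl⟩ := hw'
    constructor
    · show epsFun S ⁻¹' (@frontier _ (t1 (B1Alg S)) (V u)) ⊆
        @closure _ S.t1 (epsFun S ⁻¹' (V u))
      rw [frontier1_V, epsFun_preimage_V]
      intro z hz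
      have hz1 : z ∈ epsFun S ⁻¹' (V (pstar u))ᶜ := fun hc => hz.1 hc
      rw [epsFun_preimage_V_compl] at hz1
      have hval : (pstar u).1ᶜ = @closure _ S.t1 u.1 := by
        show (@interior _ S.t1 u.1ᶜ)ᶜ = _
        have h1 : @interior _ S.t1 u.1ᶜ = (@closure _ S.t1 u.1)ᶜ := @interior_compl _ S.t1 _
        rw [h1, compl_compl]
      exact hval ▸ hz1
    · show epsFun S ⁻¹' (@frontier _ (t2 (B1Alg S)) (V u)ᶜ) ⊆
        @closure _ S.t2 (epsFun S ⁻¹' (V u)ᶜ)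
      rw [frontier2_compl_V, epsFun_preimage_V_compl]
      intro z hz
      have hz1 : z ∈ epsFun S ⁻¹' (V (pplus u)) := hz.1
      rw [epsFun_preimage_V] at hz1
      exact hz1

lemma epsFun_injective : Function.Injective (epsFun S) := by
  intro x y hxy
  by_contra hne
  obtain ⟨U, W, hdisj, hxU, hyW, hor⟩ := S.pairwise_hausdorff x y hne
  have key : ∃ u : Set S.X, u ∈ B1 S.t1 S.t2 ∧
      ((x ∈ u ∧ y ∉ u) ∨ (x ∉ u ∧ y ∈ u)) := by
    rcases hor with ⟨hU1, hW2⟩ | ⟨hU2, hW1⟩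
    · obtain ⟨u, hu, hxu, hsub⟩ :=
        @IsTopologicalBasis.exists_subset_of_mem_open S.X S.t1 _ S.basis1 x U hxU hU1
      exact ⟨u, hu, Or.inl ⟨hxu, fun hyu => Set.disjoint_left.mp hdisj (hsub hyu) hyW⟩⟩
    · obtain ⟨v, hv, hxv, hsub⟩ :=
        @IsTopologicalBasis.exists_subset_of_mem_open S.X S.t2 _ S.basis2 x U hxU hU2
      refine ⟨vᶜ, B2.compl_mem_B1 hv, Or.inr ⟨fun hc => hc hxv, ?_⟩⟩
      exact fun hyv => Set.disjoint_left.mp hdisj (hsub hyv) hyW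
  obtain ⟨u, hu, hc⟩ := key
  have heq := congrArg (fun g : Spec (B1Alg S) => g.1 ⟨u, hu⟩) hxy
  simp only [epsFun] at heq
  rcases hc with ⟨h1, h2⟩ | ⟨h1, h2⟩ <;> simp [h1, h2] at heq

lemma epsFun_surjective : Function.Surjective (epsFun S) := by
  intro g
  classical
  set T : Set (Set S.X) :=
    {c | ∃ u : B1Alg S, (g.1 u = true ∧ c = u.1) ∨ (g.1 u = false ∧ c = u.1ᶜ)} with hT
  have hne : (⋂₀ T).Nonempty := by
    by_contra hemp
    rw [Set.not_nonempty_iff_eq_empty] at hemp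
    have hcov : ⋃₀ (compl '' T) = Set.univ := by
      rw [← Set.compl_sInter, hemp, Set.compl_empty]
    have hops : ∀ c ∈ compl '' T, IsOpen[S.t1] c ∨ IsOpen[S.t2] c := by
      rintro _ ⟨c, ⟨u, hc⟩, rfl⟩
      rcases hc with ⟨_, rfl⟩ | ⟨_, rfl⟩
      · exact Or.inr (@IsClosed.isOpen_compl _ S.t2 _ u.2.2)
      · rw [compl_compl]; exact Or.inl u.2.1
    obtain ⟨F, hFsub, hFcov⟩ := S.pairwise_compact _ hops hcov
    -- every member of F is of the form u.1ᶜ (g u = true) or u.1 (g u = false)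
    have hP : ∀ c ∈ F, ∃ u : B1Alg S,
        (g.1 u = true ∧ c = u.1ᶜ) ∨ (g.1 u = false ∧ c = u.1) := by
      intro c hcF
      obtain ⟨d, ⟨u, hd⟩, hdc⟩ := hFsub hcF
      rcases hd with ⟨hg, rfl⟩ | ⟨hg, rfl⟩
      · exact ⟨u, Or.inl ⟨hg, hdc.symm⟩⟩
      · exact ⟨u, Or.inr ⟨hg, by rw [← hdc, compl_compl]⟩⟩
    -- build algebra elements by induction over F
    have main : ∀ F' : Finset (Set S.X),
        (∀ c ∈ F', ∃ u : B1Alg S, (g.1 u = true ∧ c = u.1ᶜ) ∨ (g.1 u = false ∧ c = u.1)) →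
        ∃ m j : B1Alg S, g.1 m = true ∧ g.1 j = false ∧
          ⋃₀ (↑F' : Set (Set S.X)) ⊆ m.1ᶜ ∪ j.1 := by
      intro F'
      induction F' using Finset.induction_on with
      | empty =>
          intro _
          exact ⟨⊤, ⊥, g.2.2.1, g.2.1, by simp⟩
      | @insert c F'' hc ih =>
          intro hPP
          obtain ⟨m, j, hm, hj, hsub⟩ := ih fun c' hc' => hPP c' (Finset.mem_insert_of_mem hc')
          obtain ⟨u, hu⟩ := hPP c (Finset.mem_insert_self c F'')
          rw [Finset.coe_insert, Set.sUnion_insert]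
          rcases hu with ⟨hg, rfl⟩ | ⟨hg, rfl⟩
          · refine ⟨m ⊓ u, j, ?_, hj, ?_⟩
            · rw [g.2.2.2.1, hm, hg]; rfl
            · apply Set.union_subset
              · intro z hz
                exact Or.inl fun hzm => hz (hzm.2)
              · intro z hz
                rcases hsub hz with h | h
                · exact Or.inl fun hzm => h hzm.1
                · exact Or.inr h
          · refine ⟨m, j ⊔ u, hm, ?_, ?_⟩
            · rw [g.2.2.2.2, hj, hg]; rfl
            · apply Set.union_subset
              · intro z hz
                exact Or.inr (Or.inr hz)
              · intro z hz
                rcases hsub hz with h | h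
                · exact Or.inl h
                · exact Or.inr (Or.inl h)
    obtain ⟨m, j, hm, hj, hsub⟩ := main F hP
    have hmj : m ≤ j := by
      intro z hzm
      have hzU : z ∈ ⋃₀ (↑F : Set (Set S.X)) := by rw [hFcov]; exact Set.mem_univ z
      rcases hsub hzU with h | h
      · exact absurd hzm h
      · exact h
    have hgj := g_mono g hmj hm
    rw [hgj] at hj
    simp at hj
  obtain ⟨z, hz⟩ := hne
  refine ⟨z, Subtype.ext (funext fun u => ?_)⟩
  show decide (z ∈ u.1) = g.1 u
  cases hgu : g.1 u
  · have hmem : u.1ᶜ ∈ T := ⟨u, Or.inr ⟨hgu, rfl⟩⟩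
    exact decide_eq_false (hz _ hmem)
  · have hmem : u.1 ∈ T := ⟨u, Or.inl ⟨hgu, rfl⟩⟩
    exact decide_eq_true (hz _ hmem)

end CRDSADual
end Chunk6
section Chunk7
namespace CRDSADual
open DoubleStoneAlgebra Set TopologicalSpace CategoryTheory Opposite

variable {S : CRDPStoneSpace}

noncomputable def epsEquiv (S : CRDPStoneSpace) : S.X ≃ Spec (B1Alg S) :=
  Equiv.ofBijective (epsFun S) ⟨epsFun_injective, epsFun_surjective⟩

lemma einv_preimage (s : Set S.X) : (epsEquiv S).symm ⁻¹' s = epsFun S '' s := by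
  ext g
  constructor
  · intro hg
    exact ⟨(epsEquiv S).symm g, hg, (epsEquiv S).apply_symm_apply g⟩
  · rintro ⟨z, hz, rfl⟩
    show (epsEquiv S).symm ((epsEquiv S) z) ∈ s
    rw [(epsEquiv S).symm_apply_apply]
    exact hz

lemma epsFun_image_val (u : B1Alg S) : epsFun S '' u.1 = V u := by
  have h := Set.image_preimage_eq (f := epsFun S) (V u) epsFun_surjective
  rwa [epsFun_preimage_V] at h

lemma epsFun_image_val_compl (u : B1Alg S) : epsFun S '' u.1ᶜ = (V u)ᶜ := by
  have h := Set.image_preimage_eq (f := epsFun S) ((V u)ᶜ) epsFun_surjective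
  rwa [epsFun_preimage_V_compl] at h

/-- Package a set as an element of `B1Alg S`. -/
def mkB1 (S : CRDPStoneSpace) (u : Set S.X) (hu : u ∈ B1 S.t1 S.t2) : B1Alg S := ⟨u, hu⟩

lemma einv_isMap : IsCRDPStoneMap (SpecSpace (B1Alg S)) S ((epsEquiv S).symm) := by
  have hpre : ∀ (u : Set S.X) (hu : u ∈ B1 S.t1 S.t2),
      (epsEquiv S).symm ⁻¹' u = V (mkB1 S u hu) := fun u hu => by
    rw [einv_preimage, ← epsFun_image_val (mkB1 S u hu)]; rfl
  have hprec : ∀ (u : Set S.X) (hu : u ∈ B1 S.t1 S.t2),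
      (epsEquiv S).symm ⁻¹' uᶜ = (V (mkB1 S u hu))ᶜ := fun u hu => by
    rw [einv_preimage, ← epsFun_image_val_compl (mkB1 S u hu)]; rfl
  refine ⟨?_, ?_, ?_⟩
  · show Continuous[t1 (B1Alg S), S.t1] (epsEquiv S).symm
    refine (@IsTopologicalBasis.continuous_iff (Spec (B1Alg S)) S.X (t1 (B1Alg S))
      S.t1 _ S.basis1 _).mpr ?_
    intro u hu
    rw [hpre u hu]
    exact isOpen_t1_V _
  · show Continuous[t2 (B1Alg S), S.t2] (epsEquiv S).symm
    refine (@IsTopologicalBasis.continuous_iff (Spec (B1Alg S)) S.X (t2 (B1Alg S))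
      S.t2 _ S.basis2 _).mpr ?_
    intro v hv
    have hvc : vᶜ ∈ B1 S.t1 S.t2 := B2.compl_mem_B1 hv
    have hrw : (epsEquiv S).symm ⁻¹' v = ((epsEquiv S).symm ⁻¹' vᶜ)ᶜ := by
      rw [Set.preimage_compl, compl_compl]
    rw [hrw, hpre vᶜ hvc]
    exact isOpen_t2_compl_V _
  · intro u hu
    have hw : (mkB1 S u hu).1 = u := rfl
    constructor
    · show (epsEquiv S).symm ⁻¹' (@frontier _ S.t1 u) ⊆
        @closure _ (t1 (B1Alg S)) ((epsEquiv S).symm ⁻¹' u)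
      rw [hpre u hu, einv_preimage, cl1_V, compl_V_pstar]
      have hfs : @frontier _ S.t1 (mkB1 S u hu).1 ⊆ @closure _ S.t1 (mkB1 S u hu).1 :=
        @frontier_subset_closure _ S.t1 _
      rw [cl1_val (mkB1 S u hu)] at hfs
      intro g hg
      obtain ⟨z, hz, rfl⟩ := hg
      have hmem : epsFun S z ∈ epsFun S '' (pstar (pstar (mkB1 S u hu))).1 :=
        ⟨z, hfs hz, rfl⟩
      rwa [epsFun_image_val] at hmem
    · show (epsEquiv S).symm ⁻¹' (@frontier _ S.t2 uᶜ) ⊆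
        @closure _ (t2 (B1Alg S)) ((epsEquiv S).symm ⁻¹' uᶜ)
      rw [hprec u hu, einv_preimage, cl2_compl_V]
      have hfs : @frontier _ S.t2 (mkB1 S u hu).1ᶜ ⊆ @closure _ S.t2 (mkB1 S u hu).1ᶜ :=
        @frontier_subset_closure _ S.t2 _
      have hcl : @closure _ S.t2 (mkB1 S u hu).1ᶜ = (pplus (mkB1 S u hu)).1 := rfl
      rw [hcl] at hfs
      intro g hg
      obtain ⟨z, hz, rfl⟩ := hg
      have hmem : epsFun S z ∈ epsFun S '' (pplus (mkB1 S u hu)).1 :=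
        ⟨z, hfs hz, rfl⟩
      rwa [epsFun_image_val] at hmem

noncomputable def epsIso (S : CRDPStoneSpace) : S ≅ SpecSpace (B1Alg S) where
  hom := ⟨epsFun S, epsFun_isMap⟩
  inv := ⟨(epsEquiv S).symm, einv_isMap⟩
  hom_inv_id := Subtype.ext (funext fun z => (epsEquiv S).symm_apply_apply z)
  inv_hom_id := Subtype.ext (funext fun g => (epsEquiv S).apply_symm_apply g)

noncomputable def counitIso : Gdual ⋙ Fdual ≅ 𝟭 CRDPStoneSpaceᵒᵖ := by
  refine NatIso.ofComponents (fun S => (epsIso S.unop).op) ?_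
  intro S T f
  apply Quiver.Hom.unop_inj
  apply Subtype.ext
  funext z
  apply Subtype.ext
  rfl

end CRDSADual
end Chunk7

/-- the category of core regular double Stone algebras is dually
equivalent to the category of core regular double pairwise Stone spaces. -/
theorem CRDSA_dually_equivalent_to_CRDPStone :
    Nonempty (CategoryTheory.Equivalence CRDSACat CRDPStoneSpaceᵒᵖ) := by
  exact ⟨CategoryTheory.Equivalence.mk CRDSADual.Fdual CRDSADual.Gdual
    CRDSADual.unitIso CRDSADual.counitIso⟩
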